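/- The square [-1,1]² equals the projection onto the coordinates (X₁₂, X₁₃) of the set of 3×3 positive semidefinite matrices with all diagonal entries equal to 1 (the elliptope). That is, (x₁,x₂) ∈ [-1,1]² if and only if there exists u ∈ ℝ such that the matrix [[1,x₁,x₂],[x₁,1,u],[x₂,u,1]] is positive semidefinite. -/

import Mathlib

open Matrix

/-- The square `[-1,1]²` is the projection of the elliptope: `(x₁, x₂) ∈ [-1,1]²` iff
there is `u ∈ ℝ` such that `[[1,x₁,x₂],[x₁,1,u],[x₂,u,1]]` is positive semidefinite. -/
theorem square_eq_proj_elliptope (x₁ x₂ : ℝ) :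
    (x₁ ∈ Set.Icc (-1 : ℝ) 1 ∧ x₂ ∈ Set.Icc (-1 : ℝ) 1) ↔
      ∃ u : ℝ, (!![1, x₁, x₂; x₁, 1, u; x₂, u, 1]).PosSemidef := by
  constructor
  · rintro ⟨⟨h1, h2⟩, ⟨h3, h4⟩⟩
    refine ⟨x₁ * x₂, Matrix.posSemidef_iff_dotProduct_mulVec.mpr ⟨?_, ?_⟩⟩
    · ext i j
      fin_cases i <;> fin_cases j <;>
        simp [Matrix.conjTranspose, Matrix.vecHead, Matrix.vecTail, mul_comm]
    · intro v
      have hv : ∀ i, star (v i) = v i := fun i => rfl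
      simp only [Matrix.mulVec, dotProduct, Fin.sum_univ_three, star]
      simp [Matrix.cons_val_zero, Matrix.cons_val_one]
      nlinarith [sq_nonneg (v 0 + x₁ * v 1 + x₂ * v 2),
        mul_nonneg (by nlinarith : (0:ℝ) ≤ 1 - x₁ ^ 2) (sq_nonneg (v 1)),
        mul_nonneg (by nlinarith : (0:ℝ) ≤ 1 - x₂ ^ 2) (sq_nonneg (v 2))]
  · rintro ⟨u, hM⟩
    have h := hM.dotProduct_mulVec_nonneg
    have ha := h ![1, 1, 0]
    have hb := h ![1, -1, 0]
    have hc := h ![1, 0, 1]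
    have hd := h ![1, 0, -1]
    simp [Matrix.mulVec, dotProduct, Fin.sum_univ_three] at ha hb hc hd
    constructor <;> constructor <;> linarith
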